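/- arXiv:2503.00387 — 2 statements merged into one kernel-verified Lean document; each statement's English description precedes it below -/
import Mathlib

section
/- Let d, T be natural numbers with d ≥ 1, let λ > 0 and B ≥ 0 be reals, let x_0, …, x_{T−1} ∈ ℝ^d satisfy ‖x_t‖₂ ≤ B for all t < T, and let c_0, …, c_{T−1} ≥ 0 be reals. Define the matrices Σ_0 = λ·I and Σ_{t+1} = Σ_t + x_t x_tᵀ + c_t·I for t < T, and set w_t² = x_tᵀ Σ_t⁻¹ x_t. If β ≥ 0 and r_0, …, r_{T−1} are reals satisfying r_t² ≤ 4·β·min(w_t², 1) for every t < T, then the sum of squared instantaneous regrets satisfies Σ_{t=0}^{T−1} r_t² ≤ 8·β·d·log(1 + (T·B² + d·Σ_{t=0}^{T−1} c_t)/(d·λ)). -/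
open Matrix Finset

variable {d : ℕ}



lemma psd_vecMulVec (v : Fin d → ℝ) : (vecMulVec v v).PosSemidef := by
  refine PosSemidef.of_dotProduct_mulVec_nonneg ?_ ?_
  · ext i j; simp [vecMulVec_apply, conjTranspose_apply, mul_comm]
  · intro y
    have : dotProduct (star y) (vecMulVec v v *ᵥ y) = (v ⬝ᵥ y) ^ 2 := by
      simp only [dotProduct, mulVec, vecMulVec_apply, star, Pi.star_apply, star_trivial, sq]
      rw [Finset.sum_mul_sum]
      simp only [dotProduct, Finset.mul_sum]
      exact Finset.sum_congr rfl fun i _ => Finset.sum_congr rfl fun j _ => by ring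
    rw [this]; positivity

lemma smul_one_diag (c : ℝ) :
    c • (1 : Matrix (Fin d) (Fin d) ℝ) = diagonal (fun _ => c) := by
  ext i j
  by_cases h : i = j <;> simp [h, Matrix.smul_apply, Matrix.one_apply, diagonal_apply]

lemma pd_smul_one {lam : ℝ} (h : 0 < lam) : (lam • (1 : Matrix (Fin d) (Fin d) ℝ)).PosDef := by
  rw [smul_one_diag]
  exact posDef_diagonal_iff.mpr fun _ => h

lemma psd_smul_one {c : ℝ} (h : 0 ≤ c) : (c • (1 : Matrix (Fin d) (Fin d) ℝ)).PosSemidef := by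
  rw [smul_one_diag]
  exact posSemidef_diagonal_iff.mpr fun _ => h


-- matrix determinant lemma specialized
lemma det_add_outer {A : Matrix (Fin d) (Fin d) ℝ} (hA : A.PosDef) (v : Fin d → ℝ) :
    (A + vecMulVec v v).det = A.det * (1 + v ⬝ᵥ A⁻¹ *ᵥ v) := by
  have hu : IsUnit A.det := isUnit_iff_ne_zero.mpr hA.det_pos.ne'
  rw [vecMulVec_eq Unit, det_add_replicateCol_mul_replicateRow hu]
  congr 1
  rw [det_unique]
  simp only [Matrix.mul_apply, dotProduct, mulVec, Finset.mul_sum, Finset.sum_mul,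
    replicateRow_apply, replicateCol_apply, Pi.add_apply, Matrix.one_apply_eq, Matrix.add_apply]
  rw [Finset.sum_comm]
  congr 1
  exact Finset.sum_congr rfl fun i _ => Finset.sum_congr rfl fun j _ => by ring

-- conjugation by unitary preserves det
lemma det_conj_unitary {U : Matrix (Fin d) (Fin d) ℝ}
    (hU : U ∈ Matrix.unitaryGroup (Fin d) ℝ) (X : Matrix (Fin d) (Fin d) ℝ) :
    (U * X * star U).det = X.det := by
  have h1 : U * star U = 1 := (Matrix.mem_unitaryGroup_iff).mp hU
  calc (U * X * star U).det = U.det * X.det * (star U).det := by rw [det_mul, det_mul]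
    _ = X.det * (U * star U).det := by rw [det_mul]; ring
    _ = X.det := by rw [h1, det_one, mul_one]


lemma det_le_det_add_smul_one {B : Matrix (Fin d) (Fin d) ℝ} (hB : B.PosSemidef)
    {c : ℝ} (hc : 0 ≤ c) : B.det ≤ (B + c • 1).det := by
  have hH := hB.1
  set U : Matrix (Fin d) (Fin d) ℝ := (hH.eigenvectorUnitary : Matrix (Fin d) (Fin d) ℝ)
  have hU : U ∈ Matrix.unitaryGroup (Fin d) ℝ := hH.eigenvectorUnitary.2
  have h1 : U * star U = 1 := (Matrix.mem_unitaryGroup_iff).mp hU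
  have hspec : B = U * diagonal (RCLike.ofReal ∘ hH.eigenvalues) * star U := hH.spectral_theorem
  have hdiag : (RCLike.ofReal ∘ hH.eigenvalues : Fin d → ℝ) = hH.eigenvalues := by
    funext i; simp
  have hBc : B + c • 1 = U * (diagonal (fun i => hH.eigenvalues i + c)) * star U := by
    have : (c : ℝ) • (1 : Matrix (Fin d) (Fin d) ℝ) = U * (c • 1) * star U := by
      rw [Matrix.mul_smul, Matrix.smul_mul, Matrix.mul_one, h1]
    conv_lhs => rw [hspec, this]
    rw [← Matrix.add_mul, ← Matrix.mul_add]
    congr 2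
    rw [hdiag, smul_one_diag, diagonal_add]
  have e1 : B.det = ∏ i, hH.eigenvalues i := by
    conv_lhs => rw [hspec]
    rw [det_conj_unitary hU, hdiag, det_diagonal]
  have e2 : (B + c • 1).det = ∏ i, (hH.eigenvalues i + c) := by
    rw [hBc, det_conj_unitary hU, det_diagonal]
  rw [e1, e2]
  exact Finset.prod_le_prod (fun i _ => hB.eigenvalues_nonneg i)
    (fun i _ => le_add_of_nonneg_right hc)


lemma trace_eq_sum_eig {B : Matrix (Fin d) (Fin d) ℝ} (hH : B.IsHermitian) :
    B.trace = ∑ i, hH.eigenvalues i := by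
  have hU : (hH.eigenvectorUnitary : Matrix (Fin d) (Fin d) ℝ) ∈ Matrix.unitaryGroup (Fin d) ℝ :=
    hH.eigenvectorUnitary.2
  have h1 : star (hH.eigenvectorUnitary : Matrix (Fin d) (Fin d) ℝ) *
      (hH.eigenvectorUnitary : Matrix (Fin d) (Fin d) ℝ) = 1 :=
    (Matrix.mem_unitaryGroup_iff').mp hU
  conv_lhs => rw [hH.spectral_theorem]
  rw [Unitary.conjStarAlgAut_apply]
  rw [Matrix.trace_mul_cycle]
  rw [h1, Matrix.one_mul, trace_diagonal]
  simp

lemma det_le_trace_div_pow {B : Matrix (Fin d) (Fin d) ℝ} (hd : 1 ≤ d) (hB : B.PosSemidef) :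
    B.det ≤ (B.trace / d) ^ d := by
  have hH := hB.1
  have e1 : B.det = ∏ i, hH.eigenvalues i := by simpa using hH.det_eq_prod_eigenvalues
  have hnn : ∀ i, (0:ℝ) ≤ hH.eigenvalues i := fun i => hB.eigenvalues_nonneg i
  have hd0 : (0:ℝ) < d := by exact_mod_cast hd
  have key : ∏ i, hH.eigenvalues i ^ ((1:ℝ)/d) ≤ ∑ i, (1/(d:ℝ)) * hH.eigenvalues i := by
    refine Real.geom_mean_le_arith_mean_weighted univ _ _ (fun _ _ => by positivity) ?_
      (fun i _ => hnn i)
    · simp [Finset.sum_const]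
      field_simp
  have hsum : ∑ i, (1/(d:ℝ)) * hH.eigenvalues i = B.trace / d := by
    rw [trace_eq_sum_eig hH, Finset.sum_div]
    exact Finset.sum_congr rfl fun i _ => by ring
  have hprodpow : (∏ i, hH.eigenvalues i ^ ((1:ℝ)/d)) ^ d = ∏ i, hH.eigenvalues i := by
    rw [← Finset.prod_pow]
    refine Finset.prod_congr rfl fun i _ => ?_
    rw [← Real.rpow_natCast (hH.eigenvalues i ^ ((1:ℝ)/d)) d, ← Real.rpow_mul (hnn i)]
    rw [one_div, inv_mul_cancel₀ hd0.ne', Real.rpow_one]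
  have hgnn : (0:ℝ) ≤ ∏ i, hH.eigenvalues i ^ ((1:ℝ)/d) :=
    Finset.prod_nonneg fun i _ => Real.rpow_nonneg (hnn i) _
  calc B.det = (∏ i, hH.eigenvalues i ^ ((1:ℝ)/d)) ^ d := by rw [hprodpow, e1]
    _ ≤ (∑ i, (1/(d:ℝ)) * hH.eigenvalues i) ^ d := pow_le_pow_left₀ hgnn key d
    _ = (B.trace / d) ^ d := by rw [hsum]

lemma min_le_two_log {u : ℝ} (hu : 0 ≤ u) : min u 1 ≤ 2 * Real.log (1 + u) := by
  have h1u : (0:ℝ) < 1 + u := by linarith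
  rcases le_or_gt u 1 with h | h
  · rw [min_eq_left h]
    have hexp : Real.exp (u/2) ≤ 1 + u := by
      have h2 : (0:ℝ) < 1 - u/2 := by linarith
      have h3 : 1 - u/2 ≤ Real.exp (-(u/2)) := by
        have := Real.add_one_le_exp (-(u/2)); linarith
      have h4 : Real.exp (u/2) ≤ 1/(1 - u/2) := by
        have hm : Real.exp (u/2) * (1 - u/2) ≤ 1 := by
          calc Real.exp (u/2) * (1 - u/2) ≤ Real.exp (u/2) * Real.exp (-(u/2)) := by
                exact mul_le_mul_of_nonneg_left h3 (Real.exp_pos _).le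
            _ = 1 := by rw [← Real.exp_add]; simp
        rw [le_div_iff₀ h2]; exact hm
      have h5 : 1/(1 - u/2) ≤ 1 + u := by
        rw [div_le_iff₀ h2]; nlinarith
      linarith
    have := (Real.le_log_iff_exp_le h1u).mpr hexp
    linarith
  · rw [min_eq_right h.le]
    have hl2 : (1:ℝ)/2 ≤ Real.log 2 := by
      rw [Real.le_log_iff_exp_le (by norm_num)]
      have he : Real.exp (1/2) * Real.exp (1/2) = Real.exp 1 := by
        rw [← Real.exp_add]; norm_num
      have h1 : Real.exp 1 < 2.7182818286 := Real.exp_one_lt_d9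
      nlinarith [Real.exp_pos (1/2 : ℝ)]
    have : Real.log 2 ≤ Real.log (1 + u) := Real.log_le_log (by norm_num) (by linarith)
    linarith

theorem sum_of_squares_regret_bound
    (d T : ℕ) (hd : 1 ≤ d) (lam B : ℝ) (hlam : 0 < lam) (hB : 0 ≤ B)
    (x : ℕ → Fin d → ℝ) (hx : ∀ t < T, Real.sqrt (∑ i, x t i ^ 2) ≤ B)
    (c : ℕ → ℝ) (hc : ∀ t < T, 0 ≤ c t)
    (S : ℕ → Matrix (Fin d) (Fin d) ℝ)
    (hS0 : S 0 = lam • (1 : Matrix (Fin d) (Fin d) ℝ))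
    (hSs : ∀ t < T, S (t + 1) =
      S t + vecMulVec (x t) (x t) + c t • (1 : Matrix (Fin d) (Fin d) ℝ))
    (β : ℝ) (hβ : 0 ≤ β) (r : ℕ → ℝ)
    (hr : ∀ t < T, r t ^ 2 ≤ 4 * β * min (x t ⬝ᵥ (S t)⁻¹ *ᵥ x t) 1) :
    ∑ t ∈ Finset.range T, r t ^ 2 ≤
      8 * β * d *
        Real.log (1 + ((T : ℝ) * B ^ 2 + d * ∑ t ∈ Finset.range T, c t) / (d * lam)) := by
  set w : ℕ → ℝ := fun t => x t ⬝ᵥ (S t)⁻¹ *ᵥ x t with hw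
  have hd0 : (0:ℝ) < d := by exact_mod_cast hd
  -- positive definiteness of S t
  have hPD : ∀ t, t ≤ T → (S t).PosDef := by
    intro t
    induction t with
    | zero => intro _; rw [hS0]; exact pd_smul_one hlam
    | succ n ih =>
      intro hn
      have hnT : n < T := Nat.lt_of_succ_le hn
      rw [hSs n hnT]
      exact ((ih hnT.le).add_posSemidef (psd_vecMulVec (x n))).add_posSemidef
        (psd_smul_one (hc n hnT))
  -- nonnegativity of w
  have hwnn : ∀ t < T, 0 ≤ w t := by
    intro t ht
    have := ((hPD t ht.le).inv).posSemidef.dotProduct_mulVec_nonneg (x t)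
    simpa [hw] using this
  -- determinant growth step
  have hdetstep : ∀ t < T, (S t).det * (1 + w t) ≤ (S (t+1)).det := by
    intro t ht
    have hPDt := hPD t ht.le
    have h1 : (S t + vecMulVec (x t) (x t)).det = (S t).det * (1 + w t) :=
      det_add_outer hPDt (x t)
    have h2 : (S t + vecMulVec (x t) (x t)).det ≤
        (S t + vecMulVec (x t) (x t) + c t • 1).det :=
      det_le_det_add_smul_one (hPDt.add_posSemidef (psd_vecMulVec (x t))).posSemidef
        (hc t ht)
    rw [hSs t ht, ← h1]
    exact h2
  have hdetpos : ∀ t, t ≤ T → 0 < (S t).det := fun t ht => (hPD t ht).det_pos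
  -- log step
  have hlogstep : ∀ t < T, Real.log (1 + w t) ≤
      Real.log ((S (t+1)).det) - Real.log ((S t).det) := by
    intro t ht
    have h1w : (0:ℝ) < 1 + w t := by have := hwnn t ht; linarith
    have hp : 0 < (S t).det := hdetpos t ht.le
    have := Real.log_le_log (by positivity) (hdetstep t ht)
    rw [Real.log_mul hp.ne' h1w.ne'] at this
    linarith
  -- telescoping
  have htele : ∑ t ∈ Finset.range T, Real.log (1 + w t) ≤
      Real.log ((S T).det) - Real.log ((S 0).det) := by
    have := Finset.sum_range_sub (fun t => Real.log ((S t).det)) T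
    calc ∑ t ∈ Finset.range T, Real.log (1 + w t)
        ≤ ∑ t ∈ Finset.range T,
            (Real.log ((S (t+1)).det) - Real.log ((S t).det)) :=
          Finset.sum_le_sum fun t ht => hlogstep t (Finset.mem_range.mp ht)
      _ = Real.log ((S T).det) - Real.log ((S 0).det) := this
  -- trace bound
  have htr : ∀ n, n ≤ T → (S n).trace ≤ d * lam + n * B^2 + d * ∑ t ∈ Finset.range n, c t := by
    intro n
    induction n with
    | zero => intro _; simp [hS0, Matrix.trace_smul, Matrix.trace_one, mul_comm, smul_eq_mul]
    | succ m ih =>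
      intro hm
      have hmT : m < T := Nat.lt_of_succ_le hm
      have htrv : (vecMulVec (x m) (x m)).trace ≤ B^2 := by
        have h1 : (vecMulVec (x m) (x m)).trace = ∑ i, x m i ^ 2 := by
          simp [Matrix.trace, Matrix.diag, vecMulVec_apply, sq]
        have h2 : ∑ i, x m i ^ 2 ≤ B^2 := by
          have hnn : (0:ℝ) ≤ ∑ i, x m i ^ 2 := by positivity
          have := hx m hmT
          nlinarith [Real.sq_sqrt hnn, Real.sqrt_nonneg (∑ i, x m i ^ 2)]
        rw [h1]; exact h2
      have htrc : (c m • (1 : Matrix (Fin d) (Fin d) ℝ)).trace = c m * d := by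
        rw [Matrix.trace_smul, Matrix.trace_one]
        simp [smul_eq_mul]
      rw [hSs m hmT, Matrix.trace_add, Matrix.trace_add, htrc]
      rw [Finset.sum_range_succ]
      have := ih hmT.le
      push_cast
      nlinarith [hc m hmT]
  -- det S 0
  have hdet0 : (S 0).det = lam ^ d := by
    rw [hS0, Matrix.det_smul, det_one]
    simp
  -- final log bound
  set Q : ℝ := ((T : ℝ) * B ^ 2 + d * ∑ t ∈ Finset.range T, c t) / (d * lam) with hQ
  have hQnn : 0 ≤ Q := by
    have h1 : (0:ℝ) ≤ (T : ℝ) * B ^ 2 := by positivity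
    have h2 : (0:ℝ) ≤ ∑ t ∈ Finset.range T, c t :=
      Finset.sum_nonneg fun t ht => hc t (Finset.mem_range.mp ht)
    have : (0:ℝ) ≤ (T : ℝ) * B ^ 2 + d * ∑ t ∈ Finset.range T, c t := by positivity
    positivity
  have htrQ : (S T).trace / d ≤ lam * (1 + Q) := by
    have h1 := htr T le_rfl
    have : lam * (1 + Q) = (d * lam + T * B^2 + d * ∑ t ∈ Finset.range T, c t) / d := by
      rw [hQ]; field_simp; ring
    rw [this, div_le_div_iff_of_pos_right hd0]
    linarith
  have htrnn : 0 ≤ (S T).trace := by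
    rw [trace_eq_sum_eig (hPD T le_rfl).isHermitian]
    exact Finset.sum_nonneg fun i _ => (hPD T le_rfl).posSemidef.eigenvalues_nonneg i
  have hdetT : (S T).det ≤ (lam * (1 + Q)) ^ d := by
    calc (S T).det ≤ ((S T).trace / d) ^ d := det_le_trace_div_pow hd (hPD T le_rfl).posSemidef
      _ ≤ (lam * (1 + Q)) ^ d := pow_le_pow_left₀ (by positivity) htrQ d
  have h1Q : (0:ℝ) < 1 + Q := by linarith
  have hlogT : Real.log ((S T).det) - Real.log ((S 0).det) ≤ d * Real.log (1 + Q) := by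
    have h1 : Real.log ((S T).det) ≤ d * Real.log lam + d * Real.log (1 + Q) := by
      have := Real.log_le_log (hdetpos T le_rfl) hdetT
      rwa [mul_pow, Real.log_mul (by positivity) (by positivity),
        Real.log_pow, Real.log_pow] at this
    have h2 : Real.log ((S 0).det) = d * Real.log lam := by
      rw [hdet0, Real.log_pow]
    rw [h2]
    linarith
  -- assemble
  have hsum : ∑ t ∈ Finset.range T, r t ^ 2 ≤
      8 * β * ∑ t ∈ Finset.range T, Real.log (1 + w t) := by
    rw [Finset.mul_sum]
    refine Finset.sum_le_sum fun t ht => ?_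
    have htT := Finset.mem_range.mp ht
    have hmin := min_le_two_log (hwnn t htT)
    have := hr t htT
    nlinarith [hwnn t htT]
  calc ∑ t ∈ Finset.range T, r t ^ 2
      ≤ 8 * β * ∑ t ∈ Finset.range T, Real.log (1 + w t) := hsum
    _ ≤ 8 * β * (Real.log ((S T).det) - Real.log ((S 0).det)) := by
        exact mul_le_mul_of_nonneg_left htele (by linarith)
    _ ≤ 8 * β * (d * Real.log (1 + Q)) := mul_le_mul_of_nonneg_left hlogT (by linarith)
    _ = 8 * β * d * Real.log (1 + Q) := by ring
end

section
/- Let T and d be natural numbers, let X be a real T×d matrix, let λ > 0 be real, and set Σ = XᵀX + λ·I (a positive definite d×d matrix). Let μ* ∈ ℝ^d and ξ ∈ ℝ^T, and define the ridge-regression estimator μ̂ = Σ⁻¹ Xᵀ (X μ* + ξ). Then √((μ̂ − μ*)ᵀ Σ (μ̂ − μ*)) ≤ √λ · ‖μ*‖₂ + √((Xᵀξ)ᵀ Σ⁻¹ (Xᵀξ)). -/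
open Matrix

theorem ridge_deviation_bound
    (T d : ℕ) (X : Matrix (Fin T) (Fin d) ℝ) (lam : ℝ) (hlam : 0 < lam)
    (M : Matrix (Fin d) (Fin d) ℝ)
    (hM : M = Xᵀ * X + lam • (1 : Matrix (Fin d) (Fin d) ℝ))
    (mustar : Fin d → ℝ) (xi : Fin T → ℝ)
    (muhat : Fin d → ℝ)
    (hmuhat : muhat = M⁻¹ *ᵥ (Xᵀ *ᵥ (X *ᵥ mustar + xi))) :
    Real.sqrt ((muhat - mustar) ⬝ᵥ M *ᵥ (muhat - mustar)) ≤
      Real.sqrt lam * Real.sqrt (∑ i, mustar i ^ 2) +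
        Real.sqrt ((Xᵀ *ᵥ xi) ⬝ᵥ M⁻¹ *ᵥ (Xᵀ *ᵥ xi)) := by
  -- positive definiteness
  have hMpd : M.PosDef := by
    have hXX : (Xᵀ * X).PosSemidef := by
      simpa [conjTranspose_eq_transpose_of_trivial] using posSemidef_conjTranspose_mul_self X
    have hdiag : (lam • (1 : Matrix (Fin d) (Fin d) ℝ)).PosDef := by
      rw [smul_one_eq_diagonal]
      exact PosDef.diagonal fun _ => hlam
    rw [hM]
    exact Matrix.PosDef.posSemidef_add hXX hdiag
  have hMdet : IsUnit M.det := hMpd.det_pos.ne'.isUnit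
  have hMM : M⁻¹ * M = 1 := nonsing_inv_mul M hMdet
  have hMM' : M * M⁻¹ = 1 := mul_nonsing_inv M hMdet
  have hNpd : M⁻¹.PosDef := hMpd.inv
  have hNps : M⁻¹.PosSemidef := hNpd.posSemidef
  open scoped MatrixOrder in
  set S := CFC.sqrt M⁻¹ with hSdef
  open scoped MatrixOrder in
  have hSS : S * S = M⁻¹ := CFC.sqrt_mul_sqrt_self _ hNps.nonneg
  have hSsym : Sᵀ = S := by
    open scoped MatrixOrder in
    have := (Matrix.nonneg_iff_posSemidef.mp (CFC.sqrt_nonneg M⁻¹)).isHermitian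
    rwa [IsHermitian, conjTranspose_eq_transpose_of_trivial] at this
  -- quadratic form via sqrt
  have hQ : ∀ u : Fin d → ℝ, u ⬝ᵥ M⁻¹ *ᵥ u = (S *ᵥ u) ⬝ᵥ (S *ᵥ u) := by
    intro u
    rw [← hSS, ← mulVec_mulVec, dotProduct_mulVec, ← mulVec_transpose, hSsym]
  -- error vector identity
  set v := Xᵀ *ᵥ xi - lam • mustar with hvdef
  have hMe : M *ᵥ (muhat - mustar) = v := by
    have h1 : M *ᵥ muhat = (Xᵀ * X) *ᵥ mustar + Xᵀ *ᵥ xi := by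
      rw [hmuhat, mulVec_mulVec, hMM', one_mulVec, mulVec_add, mulVec_mulVec]
    have h2 : M *ᵥ mustar = (Xᵀ * X) *ᵥ mustar + lam • mustar := by
      rw [hM, add_mulVec, smul_mulVec, one_mulVec]
    rw [mulVec_sub, h1, h2, hvdef]
    abel
  have he : muhat - mustar = M⁻¹ *ᵥ v := by
    rw [← hMe, mulVec_mulVec, hMM, one_mulVec]
  -- LHS rewrite
  have hL : (muhat - mustar) ⬝ᵥ M *ᵥ (muhat - mustar) = v ⬝ᵥ M⁻¹ *ᵥ v := by
    rw [hMe, he, dotProduct_comm]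
  rw [hL, hQ]
  -- split S v
  have hSv : S *ᵥ v = S *ᵥ (Xᵀ *ᵥ xi) + (-lam) • (S *ᵥ mustar) := by
    rw [hvdef, mulVec_sub, mulVec_smul]
    funext i; simp; ring
  rw [hSv]
  -- triangle inequality
  have htri : ∀ p q : Fin d → ℝ,
      Real.sqrt ((p + q) ⬝ᵥ (p + q)) ≤ Real.sqrt (p ⬝ᵥ p) + Real.sqrt (q ⬝ᵥ q) := by
    intro p q
    have h : ∀ u : Fin d → ℝ, Real.sqrt (u ⬝ᵥ u) = ‖(WithLp.equiv 2 (Fin d → ℝ)).symm u‖ := by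
      intro u
      rw [EuclideanSpace.norm_eq]
      congr 1
      simp [dotProduct, Real.norm_eq_abs, sq_abs, sq]
    rw [h, h, h]
    simpa using norm_add_le ((WithLp.equiv 2 (Fin d → ℝ)).symm p) ((WithLp.equiv 2 (Fin d → ℝ)).symm q)
  refine le_trans (htri _ _) ?_
  rw [add_comm]
  gcongr ?_ + ?_
  · -- regularization term: √((-lam • Sμ)⬝(-lam • Sμ)) ≤ √lam * √(∑ μ²)
    have hscale : ((-lam) • (S *ᵥ mustar)) ⬝ᵥ ((-lam) • (S *ᵥ mustar))
        = lam ^ 2 * (mustar ⬝ᵥ M⁻¹ *ᵥ mustar) := by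
      rw [hQ]
      simp [dotProduct, Finset.mul_sum]
      congr 1; funext i; ring
    rw [hscale]
    -- key bound: lam^2 * (μ ⬝ N μ) ≤ lam * (∑ μ²)
    have hkey : lam ^ 2 * (mustar ⬝ᵥ M⁻¹ *ᵥ mustar) ≤ lam * (∑ i, mustar i ^ 2) := by
      set y := M⁻¹ *ᵥ mustar with hy
      have hmu : mustar = M *ᵥ y := by rw [hy, mulVec_mulVec, hMM', one_mulVec]
      have hMy : M *ᵥ y = Xᵀ *ᵥ (X *ᵥ y) + lam • y := by
        rw [hM, add_mulVec, smul_mulVec, one_mulVec, ← mulVec_mulVec]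
      set a := Xᵀ *ᵥ (X *ᵥ y) with ha
      have hay : a ⬝ᵥ y = (X *ᵥ y) ⬝ᵥ (X *ᵥ y) := by
        rw [ha, dotProduct_comm, dotProduct_mulVec, vecMul_transpose]
      have hya : y ⬝ᵥ a = (X *ᵥ y) ⬝ᵥ (X *ᵥ y) := by rw [dotProduct_comm, hay]
      have h1 : mustar ⬝ᵥ M⁻¹ *ᵥ mustar = (X *ᵥ y) ⬝ᵥ (X *ᵥ y) + lam * (y ⬝ᵥ y) := by
        calc mustar ⬝ᵥ M⁻¹ *ᵥ mustar = mustar ⬝ᵥ y := by rw [hy]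
          _ = (Xᵀ *ᵥ (X *ᵥ y) + lam • y) ⬝ᵥ y := by rw [hmu, hMy]
          _ = a ⬝ᵥ y + lam * (y ⬝ᵥ y) := by rw [add_dotProduct, smul_dotProduct, smul_eq_mul]
          _ = _ := by rw [hay]
      have h2 : (∑ i, mustar i ^ 2) = a ⬝ᵥ a + 2 * lam * ((X *ᵥ y) ⬝ᵥ (X *ᵥ y))
          + lam ^ 2 * (y ⬝ᵥ y) := by
        have : (∑ i, mustar i ^ 2) = mustar ⬝ᵥ mustar := by
          simp [dotProduct, sq]
        rw [this]
        calc mustar ⬝ᵥ mustar = (a + lam • y) ⬝ᵥ (a + lam • y) := by rw [hmu, hMy]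
          _ = _ := by
              simp only [add_dotProduct, dotProduct_add, smul_dotProduct, dotProduct_smul,
                smul_eq_mul, hay, hya]
              ring
      have hc : 0 ≤ (X *ᵥ y) ⬝ᵥ (X *ᵥ y) :=
        Finset.sum_nonneg fun i _ => mul_self_nonneg _
      have hs : 0 ≤ a ⬝ᵥ a :=
        Finset.sum_nonneg fun i _ => mul_self_nonneg _
      rw [h1, h2]
      nlinarith [sq_nonneg lam, mul_pos hlam hlam]
    calc Real.sqrt (lam ^ 2 * (mustar ⬝ᵥ M⁻¹ *ᵥ mustar))
        ≤ Real.sqrt (lam * (∑ i, mustar i ^ 2)) := Real.sqrt_le_sqrt hkey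
      _ = Real.sqrt lam * Real.sqrt (∑ i, mustar i ^ 2) := Real.sqrt_mul hlam.le _
  · rw [hQ]
end
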